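/- Let K be a commutative ring and L a nontrivial Lie algebra over K (there exists x ∈ L with x ≠ 0). Then the set D = {v : Fin 2 → L | v 0 = 0 ∨ v 1 = 0} is not an algebraic set over L; that is, there is no subset T of the free Lie algebra FreeLieAlgebra K (Fin 2) with D = {v : Fin 2 → L | ∀ f ∈ T, FreeLieAlgebra.lift K v f = 0}. (Hence no nontrivial Lie algebra is an equational domain in the variety of all Lie algebras over K.) -/

import Mathlib

theorem union_of_axes_not_algebraic_over_nontrivial_lie_algebra
    (K : Type*) (L : Type*) [CommRing K] [LieRing L] [LieAlgebra K L]
    (hL : ∃ x : L, x ≠ 0) :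
    ¬ ∃ T : Set (FreeLieAlgebra K (Fin 2)),
      {v : Fin 2 → L | v 0 = 0 ∨ v 1 = 0} =
        {v : Fin 2 → L | ∀ f ∈ T, FreeLieAlgebra.lift K v f = 0} := by
  rintro ⟨T, hT⟩
  obtain ⟨x, hx⟩ := hL
  letI : LieRing K := LieRing.ofAssociativeRing
  -- the Lie algebra map K → L, a ↦ a • x (K abelian, and [x,x] = 0)
  let μ : K →ₗ⁅K⁆ L :=
    { toFun := fun a => a • x
      map_add' := fun a b => add_smul a b x
      map_smul' := fun a b => by simp [mul_smul]
      map_lie' := by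
        intro a b
        simp [Ring.lie_def, mul_comm, smul_smul] }
  -- key: lifting along scalar multiples of x factors through K
  have key : ∀ w : Fin 2 → K,
      FreeLieAlgebra.lift K (fun i => w i • x) = μ.comp (FreeLieAlgebra.lift K w) := by
    intro w
    apply FreeLieAlgebra.hom_ext
    intro i
    simp [μ]
  -- sum of the two coordinate lifts (into abelian K) is a Lie hom, hence is the lift of the sum
  have sum_key : ∀ f : FreeLieAlgebra K (Fin 2),
      FreeLieAlgebra.lift K (fun _ : Fin 2 => (1 : K)) f =
        FreeLieAlgebra.lift K (![1, 0] : Fin 2 → K) f +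
        FreeLieAlgebra.lift K (![0, 1] : Fin 2 → K) f := by
    let σ : FreeLieAlgebra K (Fin 2) →ₗ⁅K⁆ K :=
      { toLinearMap := (FreeLieAlgebra.lift K (![1, 0] : Fin 2 → K)).toLinearMap +
          (FreeLieAlgebra.lift K (![0, 1] : Fin 2 → K)).toLinearMap
        map_lie' := by
          intro a b
          simp [Ring.lie_def, mul_comm] }
    have hσ : σ = FreeLieAlgebra.lift K (fun _ : Fin 2 => (1 : K)) := by
      apply FreeLieAlgebra.hom_ext
      intro i
      show ((FreeLieAlgebra.lift K (![1, 0] : Fin 2 → K)).toLinearMap +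
          (FreeLieAlgebra.lift K (![0, 1] : Fin 2 → K)).toLinearMap) (FreeLieAlgebra.of K i) = _
      rw [LinearMap.add_apply]
      fin_cases i <;> simp
    intro f
    rw [← hσ]
    rfl
  -- (x,0) and (0,x) lie in D = V(T)
  have h1 : ∀ f ∈ T, FreeLieAlgebra.lift K (fun i : Fin 2 => (![1, 0] : Fin 2 → K) i • x) f = 0 := by
    have : (fun i : Fin 2 => (![1, 0] : Fin 2 → K) i • x) ∈
        {v : Fin 2 → L | v 0 = 0 ∨ v 1 = 0} := by
      right; simp
    rw [hT] at this
    exact this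
  have h2 : ∀ f ∈ T, FreeLieAlgebra.lift K (fun i : Fin 2 => (![0, 1] : Fin 2 → K) i • x) f = 0 := by
    have : (fun i : Fin 2 => (![0, 1] : Fin 2 → K) i • x) ∈
        {v : Fin 2 → L | v 0 = 0 ∨ v 1 = 0} := by
      left; simp
    rw [hT] at this
    exact this
  -- hence (x,x) ∈ V(T)
  have hxx : (fun _ : Fin 2 => x) ∈
      {v : Fin 2 → L | ∀ f ∈ T, FreeLieAlgebra.lift K v f = 0} := by
    intro f hf
    have e : (fun _ : Fin 2 => x) = fun i : Fin 2 => (fun _ : Fin 2 => (1 : K)) i • x := by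
      funext i; simp
    rw [e, key]
    have e1 := h1 f hf
    have e2 := h2 f hf
    rw [key] at e1 e2
    simp only [LieHom.comp_apply] at e1 e2 ⊢
    rw [sum_key, map_add μ, e1, e2, add_zero]
  rw [← hT] at hxx
  rcases hxx with h | h <;> exact hx h
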